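/- Let a, b, p, s and r_1,…,r_s be positive integers with a ≤ b ≤ p - 1 and a + b ≤ p. Then N(K_{r_1,…,r_s}, K_a) + N(K_{r_1,…,r_s}, K_b) ≤ N(K_{r_1,…,r_s}, K_{a+b}). -/

import Mathlib

open SimpleGraph

/-- `N(H, G)`: the number of subgraphs of `G` isomorphic to `H`. -/
noncomputable def copyCountN {α β : Type*} (H : SimpleGraph α) (G : SimpleGraph β) : ℕ :=
  Nat.card {G' : G.Subgraph // Nonempty (G'.coe ≃g H)}

/-- The complete multipartite graph `K_{r 0, …, r (s-1)}` with parts of sizes `r i`. -/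
abbrev KR {s : ℕ} (r : Fin s → ℕ) : SimpleGraph (Σ i : Fin s, Fin (r i)) :=
  completeMultipartiteGraph fun i => Fin (r i)

/-- Adjacency pattern of `G(n,c,k)` on indices: the first `k` indices are dominating and
the first `c+1-k` indices form a clique. -/
def gAdjNat (c k a b : ℕ) : Prop :=
  a < k ∨ b < k ∨ (a < c + 1 - k ∧ b < c + 1 - k)

/-- The graph `G(n,c,k) = K_k ∨ (K_{c+1-2k} + \overline{K_{n-c-1+k}})`: the first `k`
vertices are dominating, the first `c+1-k` vertices form a clique `K_k ∨ K_{c+1-2k}`, and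
the remaining `n-c-1+k` vertices are independent, adjacent exactly to the first `k`. -/
def gGraph (n c k : ℕ) : SimpleGraph (Fin n) where
  Adj v w := v ≠ w ∧ gAdjNat c k v.val w.val
  symm := by constructor; intro v w h; refine ⟨Ne.symm h.1, ?_⟩; unfold gAdjNat at *; tauto
  loopless := by constructor; intro v h; exact h.1 rfl

/-- `g_{r_1,…,r_s}(n,c,k)`: the number of copies of `K_{r_1,…,r_s}` in `G(n,c,k)`. -/
noncomputable def gCount {s : ℕ} (r : Fin s → ℕ) (n c k : ℕ) : ℕ :=
  copyCountN (KR r) (gGraph n c k)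

/-- A graph has circumference `c` if it has a cycle of length `c` and no longer cycle. -/
def HasCircumference {V : Type*} (G : SimpleGraph V) (c : ℕ) : Prop :=
  (∃ (v : V) (w : G.Walk v v), w.IsCycle ∧ w.length = c) ∧
    ∀ (v : V) (w : G.Walk v v), w.IsCycle → w.length ≤ c

/-- A graph has detour order `p` if a longest path has `p` vertices. -/
def HasDetourOrder {V : Type*} (G : SimpleGraph V) (p : ℕ) : Prop :=
  (∃ (u v : V) (w : G.Walk u v), w.IsPath ∧ w.length + 1 = p) ∧
    ∀ (u v : V) (w : G.Walk u v), w.IsPath → w.length + 1 ≤ p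

/-- A graph is 2-connected if it has at least 3 vertices and deleting any single
vertex leaves a connected graph. -/
def TwoConnected {V : Type*} [Fintype V] (G : SimpleGraph V) : Prop :=
  3 ≤ Fintype.card V ∧ ∀ v : V, (G.induce ({v}ᶜ : Set V)).Connected

/-- A graph is traceable if it has a Hamiltonian path. -/
def Traceable {V : Type*} [DecidableEq V] (G : SimpleGraph V) : Prop :=
  ∃ (u v : V) (w : G.Walk u v), w.IsHamiltonian

/-- A graph has matching number `m` if it has a matching with `m` edges and no larger one. -/
def HasMatchingNumber {V : Type*} (G : SimpleGraph V) (m : ℕ) : Prop :=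
  (∃ M : G.Subgraph, M.IsMatching ∧ Nat.card M.edgeSet = m) ∧
    ∀ M : G.Subgraph, M.IsMatching → Nat.card M.edgeSet ≤ m


instance subgraphFinite {V : Type*} [Finite V] (G : SimpleGraph V) : Finite G.Subgraph := by
  have : Function.Injective (fun G' : G.Subgraph => (G'.verts, G'.Adj)) := by
    intro G1 G2 h
    simp only [Prod.mk.injEq] at h
    exact SimpleGraph.Subgraph.ext h.1 h.2
  exact Finite.of_injective _ this

/-- Mapping a subgraph along an embedding preserves its isomorphism type. -/
noncomputable def mapEmbIso {β γ : Type*} {G : SimpleGraph β} {G₂ : SimpleGraph γ}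
    (f : G ↪g G₂) (G' : G.Subgraph) : G'.coe ≃g (G'.map f.toHom).coe where
  toEquiv := (Equiv.Set.image f G'.verts f.injective).trans
    (Equiv.setCongr (by simp [Subgraph.map_verts]))
  map_rel_iff' := by
    rintro ⟨u, hu⟩ ⟨v, hv⟩
    simp only [Equiv.trans_apply, Equiv.Set.image_apply, Equiv.setCongr_apply,
      Subgraph.coe_adj, Subgraph.map_adj, Relation.Map]
    constructor
    · rintro ⟨a, b, hab, ha, hb⟩
      rwa [← f.injective ha, ← f.injective hb]
    · intro h
      exact ⟨u, v, h, rfl, rfl⟩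

lemma copy_nonempty_map {α β γ : Type*} {H : SimpleGraph α} {G : SimpleGraph β}
    {G₂ : SimpleGraph γ} (f : G ↪g G₂) (G' : G.Subgraph)
    (h : Nonempty (G'.coe ≃g H)) : Nonempty ((G'.map f.toHom).coe ≃g H) := by
  obtain ⟨e⟩ := h
  exact ⟨e.comp (mapEmbIso f G').symm⟩

noncomputable def copyMap {α β γ : Type*} {H : SimpleGraph α} {G : SimpleGraph β}
    {G₂ : SimpleGraph γ} (f : G ↪g G₂) :
    {G' : G.Subgraph // Nonempty (G'.coe ≃g H)} → {G' : G₂.Subgraph // Nonempty (G'.coe ≃g H)} :=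
  fun x => ⟨x.1.map f.toHom, copy_nonempty_map f x.1 x.2⟩

lemma subgraph_map_inj {β γ : Type*} {G : SimpleGraph β} {G₂ : SimpleGraph γ}
    (f : G →g G₂) (hf : Function.Injective f) :
    Function.Injective (SimpleGraph.Subgraph.map f : G.Subgraph → G₂.Subgraph) := by
  intro G1 G2 h
  have hv : f '' G1.verts = f '' G2.verts := congrArg Subgraph.verts h
  have hA : Relation.Map G1.Adj f f = Relation.Map G2.Adj f f := congrArg Subgraph.Adj h
  refine Subgraph.ext (Set.image_injective.mpr hf hv) ?_
  ext u v
  constructor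
  · intro h1
    have : Relation.Map G1.Adj f f (f u) (f v) := ⟨u, v, h1, rfl, rfl⟩
    rw [hA] at this
    obtain ⟨a, b, hab, ha, hb⟩ := this
    rwa [← hf ha, ← hf hb]
  · intro h2
    have : Relation.Map G2.Adj f f (f u) (f v) := ⟨u, v, h2, rfl, rfl⟩
    rw [← hA] at this
    obtain ⟨a, b, hab, ha, hb⟩ := this
    rwa [← hf ha, ← hf hb]

lemma copyMap_inj {α β γ : Type*} {H : SimpleGraph α} {G : SimpleGraph β}
    {G₂ : SimpleGraph γ} (f : G ↪g G₂) :
    Function.Injective (copyMap f (H := H)) := by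
  intro x y h
  exact Subtype.ext (subgraph_map_inj f.toHom f.injective (Subtype.ext_iff.mp h))

/-- If `a ≤ b ≤ p - 1` and `a + b ≤ p`, then
`N(K_{r_1,…,r_s}, K_a) + N(K_{r_1,…,r_s}, K_b) ≤ N(K_{r_1,…,r_s}, K_{a+b})`. -/
theorem statement_13 (a b p s : ℕ) (r : Fin s → ℕ)
    (ha : 0 < a) (hb : 0 < b) (hp : 0 < p) (hs : 0 < s) (hr : ∀ i, 0 < r i)
    (hab : a ≤ b) (hbp : b ≤ p - 1) (habp : a + b ≤ p) :
    copyCountN (KR r) (completeGraph (Fin a)) + copyCountN (KR r) (completeGraph (Fin b)) ≤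
      copyCountN (KR r) (completeGraph (Fin (a + b))) := by
    classical
  set H := KR r
  have hKRvert : Nonempty (Σ i : Fin s, Fin (r i)) := ⟨⟨⟨0, hs⟩, ⟨0, hr _⟩⟩⟩
  let e₁ : completeGraph (Fin a) ↪g completeGraph (Fin (a + b)) :=
    Embedding.completeGraph (Fin.castAddEmb b)
  let e₂ : completeGraph (Fin b) ↪g completeGraph (Fin (a + b)) :=
    Embedding.completeGraph (Fin.natAddEmb a)
  let F : {G' : (completeGraph (Fin a)).Subgraph // Nonempty (G'.coe ≃g H)} ⊕
      {G' : (completeGraph (Fin b)).Subgraph // Nonempty (G'.coe ≃g H)} →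
      {G' : (completeGraph (Fin (a + b))).Subgraph // Nonempty (G'.coe ≃g H)} :=
    Sum.elim (copyMap e₁) (copyMap e₂)
  have hdisj : ∀ x y, copyMap (H := H) e₁ x ≠ copyMap (H := H) e₂ y := by
    intro x y hxy
    obtain ⟨e⟩ := x.2
    obtain ⟨v, hv⟩ : ∃ v, v ∈ x.1.verts := ⟨(e.symm hKRvert.some).1, (e.symm hKRvert.some).2⟩
    have h1 : (Fin.castAdd b v : Fin (a + b)) ∈ (copyMap (H := H) e₁ x).1.verts :=
      ⟨v, hv, rfl⟩
    rw [hxy] at h1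
    obtain ⟨w, hw, hw'⟩ := h1
    have h2 : ((Fin.natAdd a w : Fin (a + b)) : ℕ) = ((Fin.castAdd b v : Fin (a + b)) : ℕ) :=
      congrArg Fin.val hw'
    simp only [Fin.coe_natAdd, Fin.coe_castAdd] at h2
    have h4 : (v : ℕ) < a := v.isLt
    omega
  have hFinj : Function.Injective F := by
    rintro (x | x) (y | y) hxy
    · exact congrArg Sum.inl (copyMap_inj e₁ hxy)
    · exact absurd hxy (hdisj x y)
    · exact absurd hxy.symm (hdisj y x)
    · exact congrArg Sum.inr (copyMap_inj e₂ hxy)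
  calc copyCountN H (completeGraph (Fin a)) + copyCountN H (completeGraph (Fin b))
      = Nat.card ({G' : (completeGraph (Fin a)).Subgraph // Nonempty (G'.coe ≃g H)} ⊕
        {G' : (completeGraph (Fin b)).Subgraph // Nonempty (G'.coe ≃g H)}) :=
        (Nat.card_sum).symm
    _ ≤ copyCountN H (completeGraph (Fin (a + b))) := Nat.card_le_card_of_injective F hFinj
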